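/- (Pascal's Lemma I for the circle.) Let P, V, N, O, K, Q be six pairwise distinct points on a circle 𝒞 of ℝ², accoupled as the pairs (P,O), (V,K), (N,Q). Suppose the lines PK and VO meet in a point M, the lines NK and VQ meet in a point S, and the lines NO and PQ meet in a point X. Then the three points M, S, X are collinear. -/

import Mathlib

noncomputable section

open EuclideanGeometry

abbrev Pt : Type := EuclideanSpace ℝ (Fin 2)

/-- The affine line through two points of the Euclidean plane. -/
def lineThrough (x y : Pt) : AffineSubspace ℝ Pt := affineSpan ℝ {x, y}

/-- A subset of the plane is a line if it is the affine span of two distinct points. -/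
def IsLine (s : AffineSubspace ℝ Pt) : Prop := ∃ x y : Pt, x ≠ y ∧ s = lineThrough x y


lemma not_all3 {a b c : ℝ} (h : ¬(a = 0 ∧ b = 0 ∧ c = 0)) : a ≠ 0 ∨ b ≠ 0 ∨ c ≠ 0 := by
  by_contra hc
  push_neg at hc
  exact h ⟨hc.1, hc.2.1, hc.2.2⟩

lemma sum_sq_ne (a b : ℝ) (h : ¬(a = 0 ∧ b = 0)) : a^2 + b^2 ≠ 0 := by
  rcases not_and_or.mp h with h'|h'
  · have h2 : 0 < a^2 := by positivity
    nlinarith [sq_nonneg b]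
  · have h2 : 0 < b^2 := by positivity
    nlinarith [sq_nonneg a]

lemma prop2 (a b c d : ℝ) (h : ¬(a = 0 ∧ b = 0)) (hdet : a*d - b*c = 0) :
    ∃ t : ℝ, c = t*a ∧ d = t*b := by
  have hd := sum_sq_ne a b h
  refine ⟨(a*c + b*d)/(a^2 + b^2), ?_, ?_⟩ <;> rw [div_mul_eq_mul_div, eq_div_iff hd]
  · linear_combination (-b)*hdet
  · linear_combination a*hdet

lemma prop3 (u1 u2 u3 v1 v2 v3 : ℝ) (h1 : u2*v3 - u3*v2 = 0) (h2 : u3*v1 - u1*v3 = 0)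
    (h3 : u1*v2 - u2*v1 = 0) (hv : v1 ≠ 0 ∨ v2 ≠ 0 ∨ v3 ≠ 0) :
    ∃ c : ℝ, u1 = c*v1 ∧ u2 = c*v2 ∧ u3 = c*v3 := by
  have hd : v1^2 + v2^2 + v3^2 ≠ 0 := by
    rcases hv with h|h|h
    · have h2' : 0 < v1^2 := by positivity
      nlinarith [sq_nonneg v2, sq_nonneg v3]
    · have h2' : 0 < v2^2 := by positivity
      nlinarith [sq_nonneg v1, sq_nonneg v3]
    · have h2' : 0 < v3^2 := by positivity
      nlinarith [sq_nonneg v1, sq_nonneg v2]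
  refine ⟨(u1*v1 + u2*v2 + u3*v3)/(v1^2 + v2^2 + v3^2), ?_, ?_, ?_⟩ <;>
    rw [div_mul_eq_mul_div, eq_div_iff hd]
  · linear_combination v2*h3 - v3*h2
  · linear_combination v3*h1 - v1*h3
  · linear_combination v1*h2 - v2*h1

lemma circle3 (p1 p2 k1 k2 v1 v2 r : ℝ)
    (hp : p1^2 + p2^2 = r) (hk : k1^2 + k2^2 = r) (hv : v1^2 + v2^2 = r)
    (hPK : ¬(p1 = k1 ∧ p2 = k2))
    (hdet : (v1 - p1)*(k2 - p2) - (v2 - p2)*(k1 - p1) = 0) :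
    (v1 = p1 ∧ v2 = p2) ∨ (v1 = k1 ∧ v2 = k2) := by
  have hne : ¬(k1 - p1 = 0 ∧ k2 - p2 = 0) := by
    rintro ⟨h1, h2⟩; exact hPK ⟨by linarith, by linarith⟩
  obtain ⟨t, ht1, ht2⟩ := prop2 (k1-p1) (k2-p2) (v1-p1) (v2-p2) hne (by linear_combination -hdet)
  have hd := sum_sq_ne (k1-p1) (k2-p2) hne
  have key : t*(t-1)*((k1-p1)^2 + (k2-p2)^2) = 0 := by
    linear_combination hv - hp - t*hk + t*hp - (v1 + p1 + t*(k1-p1))*ht1 - (v2 + p2 + t*(k2-p2))*ht2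
  have h2 : t*(t-1) = 0 := by
    rcases mul_eq_zero.mp key with h|h
    · exact h
    · exact absurd h hd
  rcases mul_eq_zero.mp h2 with h|h
  · rw [h] at ht1 ht2
    exact Or.inl ⟨by linarith, by linarith⟩
  · rw [show t = 1 by linarith] at ht1 ht2
    exact Or.inr ⟨by linarith, by linarith⟩

lemma line_cross_ne (p1 p2 k1 k2 v1 v2 o1 o2 r : ℝ)
    (hp : p1^2 + p2^2 = r) (hk : k1^2 + k2^2 = r) (hv : v1^2 + v2^2 = r)
    (hPK : ¬(p1 = k1 ∧ p2 = k2)) (hVO : ¬(v1 = o1 ∧ v2 = o2))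
    (hVP : ¬(v1 = p1 ∧ v2 = p2)) (hVK : ¬(v1 = k1 ∧ v2 = k2)) :
    ¬((((1:ℝ)*k1 - p1*(1:ℝ))*(v1*o2 - v2*o1) - (p1*k2 - p2*k1)*((1:ℝ)*o1 - v1*(1:ℝ))) = 0 ∧ ((p1*k2 - p2*k1)*(v2*(1:ℝ) - (1:ℝ)*o2) - (p2*(1:ℝ) - (1:ℝ)*k2)*(v1*o2 - v2*o1)) = 0 ∧ ((p2*(1:ℝ) - (1:ℝ)*k2)*((1:ℝ)*o1 - v1*(1:ℝ)) - ((1:ℝ)*k1 - p1*(1:ℝ))*(v2*(1:ℝ) - (1:ℝ)*o2)) = 0) := by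
  rintro ⟨h1, h2, h3⟩
  have hL1 : (p2 - k2) ≠ 0 ∨ (k1 - p1) ≠ 0 ∨ (p1*k2 - p2*k1) ≠ 0 := by
    rcases not_and_or.mp hPK with h|h
    · exact Or.inr (Or.inl (fun hc => h (by linarith)))
    · exact Or.inl (fun hc => h (by linarith))
  obtain ⟨c, hc1, hc2, hc3⟩ := prop3 (v2 - o2) (o1 - v1) (v1*o2 - v2*o1)
    (p2 - k2) (k1 - p1) (p1*k2 - p2*k1)
    (by linear_combination -h1) (by linear_combination -h2) (by linear_combination -h3) hL1
  have hc0 : c ≠ 0 := by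
    intro h0; rw [h0] at hc1 hc2
    exact hVO ⟨by linarith, by linarith⟩
  have hVL1 : c * (v1*(p2 - k2) + v2*(k1 - p1) + (p1*k2 - p2*k1)) = 0 := by
    linear_combination (-v1)*hc1 - v2*hc2 - hc3
  have hVL1' : v1*(p2 - k2) + v2*(k1 - p1) + (p1*k2 - p2*k1) = 0 := by
    rcases mul_eq_zero.mp hVL1 with h|h
    · exact absurd h hc0
    · exact h
  have hdet : (v1 - p1)*(k2 - p2) - (v2 - p2)*(k1 - p1) = 0 := by linear_combination -hVL1'
  rcases circle3 p1 p2 k1 k2 v1 v2 r hp hk hv hPK hdet with ⟨e1, e2⟩|⟨e1, e2⟩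
  · exact hVP ⟨e1, e2⟩
  · exact hVK ⟨e1, e2⟩

set_option maxHeartbeats 2000000 in
lemma pascal_key (p1 p2 v1 v2 n1 n2 o1 o2 k1 k2 q1 q2 r : ℝ)
    (hP : p1^2 + p2^2 = r) (hV : v1^2 + v2^2 = r) (hN : n1^2 + n2^2 = r)
    (hO : o1^2 + o2^2 = r) (hK : k1^2 + k2^2 = r) (hQ : q1^2 + q2^2 = r) :
    (((1:ℝ)*k1 - p1*(1:ℝ))*(v1*o2 - v2*o1) - (p1*k2 - p2*k1)*((1:ℝ)*o1 - v1*(1:ℝ)))*(((n1*k2 - n2*k1)*(v2*(1:ℝ) - (1:ℝ)*q2) - (n2*(1:ℝ) - (1:ℝ)*k2)*(v1*q2 - v2*q1))*((n2*(1:ℝ) - (1:ℝ)*o2)*((1:ℝ)*q1 - p1*(1:ℝ)) - ((1:ℝ)*o1 - n1*(1:ℝ))*(p2*(1:ℝ) - (1:ℝ)*q2)) - ((n2*(1:ℝ) - (1:ℝ)*k2)*((1:ℝ)*q1 - v1*(1:ℝ)) - ((1:ℝ)*k1 - n1*(1:ℝ))*(v2*(1:ℝ) - (1:ℝ)*q2))*((n1*o2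 - n2*o1)*(p2*(1:ℝ) - (1:ℝ)*q2) - (n2*(1:ℝ) - (1:ℝ)*o2)*(p1*q2 - p2*q1))) + ((p1*k2 - p2*k1)*(v2*(1:ℝ) - (1:ℝ)*o2) - (p2*(1:ℝ) - (1:ℝ)*k2)*(v1*o2 - v2*o1))*(((n2*(1:ℝ) - (1:ℝ)*k2)*((1:ℝ)*q1 - v1*(1:ℝ)) - ((1:ℝ)*k1 - n1*(1:ℝ))*(v2*(1:ℝ) - (1:ℝ)*q2))*(((1:ℝ)*o1 - n1*(1:ℝ))*(p1*q2 - p2*q1) - (n1*o2 - n2*o1)*((1:ℝ)*q1 - p1*(1:ℝ))) - (((1:ℝ)*k1 - n1*(1:ℝ))*(v1*q2 - v2*q1) - (n1*k2 - n2*k1)*((1:ℝ)*q1 - v1*(1:ℝ)))*((n2*(1:ℝ) - (1:ℝ)*o2)*((1:ℝ)*q1 - p1*(1:ℝ)) - ((1:ℝ)*o1 - n1*(1:ℝ))*(p2*(1:ℝ) - (1:ℝ)*q2))) + ((p2*(1:ℝ) - (1:ℝ)*k2)*((1:ℝ)*o1 - v1*(1:ℝ)) - ((1:ℝ)*k1 -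 p1*(1:ℝ))*(v2*(1:ℝ) - (1:ℝ)*o2))*((((1:ℝ)*k1 - n1*(1:ℝ))*(v1*q2 - v2*q1) - (n1*k2 - n2*k1)*((1:ℝ)*q1 - v1*(1:ℝ)))*((n1*o2 - n2*o1)*(p2*(1:ℝ) - (1:ℝ)*q2) - (n2*(1:ℝ) - (1:ℝ)*o2)*(p1*q2 - p2*q1)) - ((n1*k2 - n2*k1)*(v2*(1:ℝ) - (1:ℝ)*q2) - (n2*(1:ℝ) - (1:ℝ)*k2)*(v1*q2 - v2*q1))*(((1:ℝ)*o1 - n1*(1:ℝ))*(p1*q2 - p2*q1) - (n1*o2 - n2*o1)*((1:ℝ)*q1 - p1*(1:ℝ)))) = 0 := by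
  linear_combination
    (- n2*o2^2*k1*q1*q2 + n2*o2^2*k1*k2*q1 + n2*o1*k2^2*q1*q2 - n2*o1*k1*k2*q2^2 - n2*o1*o2*k2^2*q1 + n2*o1*o2*k1*q2^2 + n2^2*o2*k1*q1*q2 - n2^2*o2*k1*k2*q1 - n2^2*o1*k2*q1*q2 + n2^2*o1*k1*k2*q2 + n2^2*o1*o2*k2*q1 - n2^2*o1*o2*k1*q2 - n1*o2*k2^2*q1*q2 + n1*o2*k1*k2*q2^2 + n1*o2^2*k2*q1*q2 - n1*o2^2*k1*k2*q2 - n1*o1*o2*k2*q2^2 + n1*o1*o2*k2^2*q2 + n1*n2*o2*k2^2*q1 - n1*n2*o2*k1*q2^2 - n1*n2*o2^2*k2*q1 + n1*n2*o2^2*k1*q2 + n1*n2*o1*k2*q2^2 - n1*n2*o1*k2^2*q2 + v2*o2^2*k1*q1*q2 - v2*o2^2*k1*k2*q1 - v2*o1*k2^2*q1*q2 + v2*o1*k1*k2*q2^2 + v2*o1*o2*k2^2*q1 - v2*o1*o2*k1*q2^2 - v2*n2^2*k1*q1*q2 + v2*n2^2*k1*k2*q1 + v2*n2^2*o1*q1*q2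 - v2*n2^2*o1*k1*k2 - v2*n2^2*o1*o2*q1 + v2*n2^2*o1*o2*k1 + v2*n1*k2^2*q1*q2 - v2*n1*k1*k2*q2^2 - v2*n1*o2^2*q1*q2 + v2*n1*o2^2*k1*k2 + v2*n1*o1*o2*q2^2 - v2*n1*o1*o2*k2^2 - v2*n1*n2*k2^2*q1 + v2*n1*n2*k1*q2^2 + v2*n1*n2*o2^2*q1 - v2*n1*n2*o2^2*k1 - v2*n1*n2*o1*q2^2 + v2*n1*n2*o1*k2^2 - v2^2*o2*k1*q1*q2 + v2^2*o2*k1*k2*q1 + v2^2*o1*k2*q1*q2 - v2^2*o1*k1*k2*q2 - v2^2*o1*o2*k2*q1 + v2^2*o1*o2*k1*q2 + v2^2*n2*k1*q1*q2 - v2^2*n2*k1*k2*q1 - v2^2*n2*o1*q1*q2 + v2^2*n2*o1*k1*k2 + v2^2*n2*o1*o2*q1 - v2^2*n2*o1*o2*k1 - v2^2*n1*k2*q1*q2 + v2^2*n1*k1*k2*q2 + v2^2*n1*o2*q1*q2 - v2^2*n1*o2*k1*k2 - v2^2*n1*o1*o2*q2 + v2^2*n1*o1*o2*k2 + v2^2*n1*n2*k2*q1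 - v2^2*n1*n2*k1*q2 - v2^2*n1*n2*o2*q1 + v2^2*n1*n2*o2*k1 + v2^2*n1*n2*o1*q2 - v2^2*n1*n2*o1*k2 + v1*o2*k2^2*q1*q2 - v1*o2*k1*k2*q2^2 - v1*o2^2*k2*q1*q2 + v1*o2^2*k1*k2*q2 + v1*o1*o2*k2*q2^2 - v1*o1*o2*k2^2*q2 - v1*n2*k2^2*q1*q2 + v1*n2*k1*k2*q2^2 + v1*n2*o2^2*q1*q2 - v1*n2*o2^2*k1*k2 - v1*n2*o1*o2*q2^2 + v1*n2*o1*o2*k2^2 + v1*n2^2*k2*q1*q2 - v1*n2^2*k1*k2*q2 - v1*n2^2*o2*q1*q2 + v1*n2^2*o2*k1*k2 + v1*n2^2*o1*o2*q2 - v1*n2^2*o1*o2*k2 - v1*n1*n2*k2*q2^2 + v1*n1*n2*k2^2*q2 + v1*n1*n2*o2*q2^2 - v1*n1*n2*o2*k2^2 - v1*n1*n2*o2^2*q2 + v1*n1*n2*o2^2*k2 - v1*v2*o2*k2^2*q1 + v1*v2*o2*k1*q2^2 + v1*v2*o2^2*k2*q1 - v1*v2*o2^2*k1*q2 - v1*v2*o1*k2*q2^2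 + v1*v2*o1*k2^2*q2 + v1*v2*n2*k2^2*q1 - v1*v2*n2*k1*q2^2 - v1*v2*n2*o2^2*q1 + v1*v2*n2*o2^2*k1 + v1*v2*n2*o1*q2^2 - v1*v2*n2*o1*k2^2 - v1*v2*n2^2*k2*q1 + v1*v2*n2^2*k1*q2 + v1*v2*n2^2*o2*q1 - v1*v2*n2^2*o2*k1 - v1*v2*n2^2*o1*q2 + v1*v2*n2^2*o1*k2 + v1*v2*n1*k2*q2^2 - v1*v2*n1*k2^2*q2 - v1*v2*n1*o2*q2^2 + v1*v2*n1*o2*k2^2 + v1*v2*n1*o2^2*q2 - v1*v2*n1*o2^2*k2) * hP +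
      (n2*o2^2*k1*q1*q2 - n2*o2^2*k1*k2*q1 - n2*o1*k2^2*q1*q2 + n2*o1*k1*k2*q2^2 + n2*o1*o2*k2^2*q1 - n2*o1*o2*k1*q2^2 - n2^2*o2*k1*q1*q2 + n2^2*o2*k1*k2*q1 + n2^2*o1*k2*q1*q2 - n2^2*o1*k1*k2*q2 - n2^2*o1*o2*k2*q1 + n2^2*o1*o2*k1*q2 + n1*o2*k2^2*q1*q2 - n1*o2*k1*k2*q2^2 - n1*o2^2*k2*q1*q2 + n1*o2^2*k1*k2*q2 + n1*o1*o2*k2*q2^2 - n1*o1*o2*k2^2*q2 - n1*n2*o2*k2^2*q1 + n1*n2*o2*k1*q2^2 + n1*n2*o2^2*k2*q1 - n1*n2*o2^2*k1*q2 - n1*n2*o1*k2*q2^2 + n1*n2*o1*k2^2*q2 - p2*o2^2*k1*q1*q2 + p2*o2^2*k1*k2*q1 + p2*o1*k2^2*q1*q2 - p2*o1*k1*k2*q2^2 - p2*o1*o2*k2^2*q1 + p2*o1*o2*k1*q2^2 + p2*n2^2*k1*q1*q2 - p2*n2^2*k1*k2*q1 - p2*n2^2*o1*q1*q2 + p2*n2^2*o1*k1*k2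 + p2*n2^2*o1*o2*q1 - p2*n2^2*o1*o2*k1 - p2*n1*k2^2*q1*q2 + p2*n1*k1*k2*q2^2 + p2*n1*o2^2*q1*q2 - p2*n1*o2^2*k1*k2 - p2*n1*o1*o2*q2^2 + p2*n1*o1*o2*k2^2 + p2*n1*n2*k2^2*q1 - p2*n1*n2*k1*q2^2 - p2*n1*n2*o2^2*q1 + p2*n1*n2*o2^2*k1 + p2*n1*n2*o1*q2^2 - p2*n1*n2*o1*k2^2 + p2^2*o2*k1*q1*q2 - p2^2*o2*k1*k2*q1 - p2^2*o1*k2*q1*q2 + p2^2*o1*k1*k2*q2 + p2^2*o1*o2*k2*q1 - p2^2*o1*o2*k1*q2 - p2^2*n2*k1*q1*q2 + p2^2*n2*k1*k2*q1 + p2^2*n2*o1*q1*q2 - p2^2*n2*o1*k1*k2 - p2^2*n2*o1*o2*q1 + p2^2*n2*o1*o2*k1 + p2^2*n1*k2*q1*q2 - p2^2*n1*k1*k2*q2 - p2^2*n1*o2*q1*q2 + p2^2*n1*o2*k1*k2 + p2^2*n1*o1*o2*q2 - p2^2*n1*o1*o2*k2 - p2^2*n1*n2*k2*q1 + p2^2*n1*n2*k1*q2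 + p2^2*n1*n2*o2*q1 - p2^2*n1*n2*o2*k1 - p2^2*n1*n2*o1*q2 + p2^2*n1*n2*o1*k2 - p1*o2*k2^2*q1*q2 + p1*o2*k1*k2*q2^2 + p1*o2^2*k2*q1*q2 - p1*o2^2*k1*k2*q2 - p1*o1*o2*k2*q2^2 + p1*o1*o2*k2^2*q2 + p1*n2*k2^2*q1*q2 - p1*n2*k1*k2*q2^2 - p1*n2*o2^2*q1*q2 + p1*n2*o2^2*k1*k2 + p1*n2*o1*o2*q2^2 - p1*n2*o1*o2*k2^2 - p1*n2^2*k2*q1*q2 + p1*n2^2*k1*k2*q2 + p1*n2^2*o2*q1*q2 - p1*n2^2*o2*k1*k2 - p1*n2^2*o1*o2*q2 + p1*n2^2*o1*o2*k2 + p1*n1*n2*k2*q2^2 - p1*n1*n2*k2^2*q2 - p1*n1*n2*o2*q2^2 + p1*n1*n2*o2*k2^2 + p1*n1*n2*o2^2*q2 - p1*n1*n2*o2^2*k2 + p1*p2*o2*k2^2*q1 - p1*p2*o2*k1*q2^2 - p1*p2*o2^2*k2*q1 + p1*p2*o2^2*k1*q2 + p1*p2*o1*k2*q2^2 - p1*p2*o1*k2^2*q2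 - p1*p2*n2*k2^2*q1 + p1*p2*n2*k1*q2^2 + p1*p2*n2*o2^2*q1 - p1*p2*n2*o2^2*k1 - p1*p2*n2*o1*q2^2 + p1*p2*n2*o1*k2^2 + p1*p2*n2^2*k2*q1 - p1*p2*n2^2*k1*q2 - p1*p2*n2^2*o2*q1 + p1*p2*n2^2*o2*k1 + p1*p2*n2^2*o1*q2 - p1*p2*n2^2*o1*k2 - p1*p2*n1*k2*q2^2 + p1*p2*n1*k2^2*q2 + p1*p2*n1*o2*q2^2 - p1*p2*n1*o2*k2^2 - p1*p2*n1*o2^2*q2 + p1*p2*n1*o2^2*k2) * hV +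
      (- v2*o2^2*k1*q1*q2 + v2*o2^2*k1*k2*q1 + v2*o1*k2^2*q1*q2 - v2*o1*k1*k2*q2^2 - v2*o1*o2*k2^2*q1 + v2*o1*o2*k1*q2^2 + v2^2*o2*k1*q1*q2 - v2^2*o2*k1*k2*q1 - v2^2*o1*k2*q1*q2 + v2^2*o1*k1*k2*q2 + v2^2*o1*o2*k2*q1 - v2^2*o1*o2*k1*q2 - v1*o2*k2^2*q1*q2 + v1*o2*k1*k2*q2^2 + v1*o2^2*k2*q1*q2 - v1*o2^2*k1*k2*q2 - v1*o1*o2*k2*q2^2 + v1*o1*o2*k2^2*q2 + v1*v2*o2*k2^2*q1 - v1*v2*o2*k1*q2^2 - v1*v2*o2^2*k2*q1 + v1*v2*o2^2*k1*q2 + v1*v2*o1*k2*q2^2 - v1*v2*o1*k2^2*q2 + p2*o2^2*k1*q1*q2 - p2*o2^2*k1*k2*q1 - p2*o1*k2^2*q1*q2 + p2*o1*k1*k2*q2^2 + p2*o1*o2*k2^2*q1 - p2*o1*o2*k1*q2^2 - p2*v2^2*k1*q1*q2 + p2*v2^2*k1*k2*q1 + p2*v2^2*o1*q1*q2 - p2*v2^2*o1*k1*k2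 - p2*v2^2*o1*o2*q1 + p2*v2^2*o1*o2*k1 + p2*v1*k2^2*q1*q2 - p2*v1*k1*k2*q2^2 - p2*v1*o2^2*q1*q2 + p2*v1*o2^2*k1*k2 + p2*v1*o1*o2*q2^2 - p2*v1*o1*o2*k2^2 - p2*v1*v2*k2^2*q1 + p2*v1*v2*k1*q2^2 + p2*v1*v2*o2^2*q1 - p2*v1*v2*o2^2*k1 - p2*v1*v2*o1*q2^2 + p2*v1*v2*o1*k2^2 - p2^2*o2*k1*q1*q2 + p2^2*o2*k1*k2*q1 + p2^2*o1*k2*q1*q2 - p2^2*o1*k1*k2*q2 - p2^2*o1*o2*k2*q1 + p2^2*o1*o2*k1*q2 + p2^2*v2*k1*q1*q2 - p2^2*v2*k1*k2*q1 - p2^2*v2*o1*q1*q2 + p2^2*v2*o1*k1*k2 + p2^2*v2*o1*o2*q1 - p2^2*v2*o1*o2*k1 - p2^2*v1*k2*q1*q2 + p2^2*v1*k1*k2*q2 + p2^2*v1*o2*q1*q2 - p2^2*v1*o2*k1*k2 - p2^2*v1*o1*o2*q2 + p2^2*v1*o1*o2*k2 + p2^2*v1*v2*k2*q1 - p2^2*v1*v2*k1*q2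 - p2^2*v1*v2*o2*q1 + p2^2*v1*v2*o2*k1 + p2^2*v1*v2*o1*q2 - p2^2*v1*v2*o1*k2 + p1*o2*k2^2*q1*q2 - p1*o2*k1*k2*q2^2 - p1*o2^2*k2*q1*q2 + p1*o2^2*k1*k2*q2 + p1*o1*o2*k2*q2^2 - p1*o1*o2*k2^2*q2 - p1*v2*k2^2*q1*q2 + p1*v2*k1*k2*q2^2 + p1*v2*o2^2*q1*q2 - p1*v2*o2^2*k1*k2 - p1*v2*o1*o2*q2^2 + p1*v2*o1*o2*k2^2 + p1*v2^2*k2*q1*q2 - p1*v2^2*k1*k2*q2 - p1*v2^2*o2*q1*q2 + p1*v2^2*o2*k1*k2 + p1*v2^2*o1*o2*q2 - p1*v2^2*o1*o2*k2 - p1*v1*v2*k2*q2^2 + p1*v1*v2*k2^2*q2 + p1*v1*v2*o2*q2^2 - p1*v1*v2*o2*k2^2 - p1*v1*v2*o2^2*q2 + p1*v1*v2*o2^2*k2 - p1*p2*o2*k2^2*q1 + p1*p2*o2*k1*q2^2 + p1*p2*o2^2*k2*q1 - p1*p2*o2^2*k1*q2 - p1*p2*o1*k2*q2^2 + p1*p2*o1*k2^2*q2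 + p1*p2*v2*k2^2*q1 - p1*p2*v2*k1*q2^2 - p1*p2*v2*o2^2*q1 + p1*p2*v2*o2^2*k1 + p1*p2*v2*o1*q2^2 - p1*p2*v2*o1*k2^2 - p1*p2*v2^2*k2*q1 + p1*p2*v2^2*k1*q2 + p1*p2*v2^2*o2*q1 - p1*p2*v2^2*o2*k1 - p1*p2*v2^2*o1*q2 + p1*p2*v2^2*o1*k2 + p1*p2*v1*k2*q2^2 - p1*p2*v1*k2^2*q2 - p1*p2*v1*o2*q2^2 + p1*p2*v1*o2*k2^2 + p1*p2*v1*o2^2*q2 - p1*p2*v1*o2^2*k2) * hN +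
      (v2*n2^2*k1*q1*q2 - v2*n2^2*k1*k2*q1 - v2*n1*k2^2*q1*q2 + v2*n1*k1*k2*q2^2 + v2*n1*n2*k2^2*q1 - v2*n1*n2*k1*q2^2 - v2^2*n2*k1*q1*q2 + v2^2*n2*k1*k2*q1 + v2^2*n1*k2*q1*q2 - v2^2*n1*k1*k2*q2 - v2^2*n1*n2*k2*q1 + v2^2*n1*n2*k1*q2 + v1*n2*k2^2*q1*q2 - v1*n2*k1*k2*q2^2 - v1*n2^2*k2*q1*q2 + v1*n2^2*k1*k2*q2 + v1*n1*n2*k2*q2^2 - v1*n1*n2*k2^2*q2 - v1*v2*n2*k2^2*q1 + v1*v2*n2*k1*q2^2 + v1*v2*n2^2*k2*q1 - v1*v2*n2^2*k1*q2 - v1*v2*n1*k2*q2^2 + v1*v2*n1*k2^2*q2 - p2*n2^2*k1*q1*q2 + p2*n2^2*k1*k2*q1 + p2*n1*k2^2*q1*q2 - p2*n1*k1*k2*q2^2 - p2*n1*n2*k2^2*q1 + p2*n1*n2*k1*q2^2 + p2*v2^2*k1*q1*q2 - p2*v2^2*k1*k2*q1 - p2*v2^2*n1*q1*q2 + p2*v2^2*n1*k1*k2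 + p2*v2^2*n1*n2*q1 - p2*v2^2*n1*n2*k1 - p2*v1*k2^2*q1*q2 + p2*v1*k1*k2*q2^2 + p2*v1*n2^2*q1*q2 - p2*v1*n2^2*k1*k2 - p2*v1*n1*n2*q2^2 + p2*v1*n1*n2*k2^2 + p2*v1*v2*k2^2*q1 - p2*v1*v2*k1*q2^2 - p2*v1*v2*n2^2*q1 + p2*v1*v2*n2^2*k1 + p2*v1*v2*n1*q2^2 - p2*v1*v2*n1*k2^2 + p2^2*n2*k1*q1*q2 - p2^2*n2*k1*k2*q1 - p2^2*n1*k2*q1*q2 + p2^2*n1*k1*k2*q2 + p2^2*n1*n2*k2*q1 - p2^2*n1*n2*k1*q2 - p2^2*v2*k1*q1*q2 + p2^2*v2*k1*k2*q1 + p2^2*v2*n1*q1*q2 - p2^2*v2*n1*k1*k2 - p2^2*v2*n1*n2*q1 + p2^2*v2*n1*n2*k1 + p2^2*v1*k2*q1*q2 - p2^2*v1*k1*k2*q2 - p2^2*v1*n2*q1*q2 + p2^2*v1*n2*k1*k2 + p2^2*v1*n1*n2*q2 - p2^2*v1*n1*n2*k2 - p2^2*v1*v2*k2*q1 + p2^2*v1*v2*k1*q2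 + p2^2*v1*v2*n2*q1 - p2^2*v1*v2*n2*k1 - p2^2*v1*v2*n1*q2 + p2^2*v1*v2*n1*k2 - p1*n2*k2^2*q1*q2 + p1*n2*k1*k2*q2^2 + p1*n2^2*k2*q1*q2 - p1*n2^2*k1*k2*q2 - p1*n1*n2*k2*q2^2 + p1*n1*n2*k2^2*q2 + p1*v2*k2^2*q1*q2 - p1*v2*k1*k2*q2^2 - p1*v2*n2^2*q1*q2 + p1*v2*n2^2*k1*k2 + p1*v2*n1*n2*q2^2 - p1*v2*n1*n2*k2^2 - p1*v2^2*k2*q1*q2 + p1*v2^2*k1*k2*q2 + p1*v2^2*n2*q1*q2 - p1*v2^2*n2*k1*k2 - p1*v2^2*n1*n2*q2 + p1*v2^2*n1*n2*k2 + p1*v1*v2*k2*q2^2 - p1*v1*v2*k2^2*q2 - p1*v1*v2*n2*q2^2 + p1*v1*v2*n2*k2^2 + p1*v1*v2*n2^2*q2 - p1*v1*v2*n2^2*k2 + p1*p2*n2*k2^2*q1 - p1*p2*n2*k1*q2^2 - p1*p2*n2^2*k2*q1 + p1*p2*n2^2*k1*q2 + p1*p2*n1*k2*q2^2 - p1*p2*n1*k2^2*q2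 - p1*p2*v2*k2^2*q1 + p1*p2*v2*k1*q2^2 + p1*p2*v2*n2^2*q1 - p1*p2*v2*n2^2*k1 - p1*p2*v2*n1*q2^2 + p1*p2*v2*n1*k2^2 + p1*p2*v2^2*k2*q1 - p1*p2*v2^2*k1*q2 - p1*p2*v2^2*n2*q1 + p1*p2*v2^2*n2*k1 + p1*p2*v2^2*n1*q2 - p1*p2*v2^2*n1*k2 - p1*p2*v1*k2*q2^2 + p1*p2*v1*k2^2*q2 + p1*p2*v1*n2*q2^2 - p1*p2*v1*n2*k2^2 - p1*p2*v1*n2^2*q2 + p1*p2*v1*n2^2*k2) * hO +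
      (- v2*n2^2*o1*q1*q2 + v2*n2^2*o1*o2*q1 + v2*n1*o2^2*q1*q2 - v2*n1*o1*o2*q2^2 - v2*n1*n2*o2^2*q1 + v2*n1*n2*o1*q2^2 + v2^2*n2*o1*q1*q2 - v2^2*n2*o1*o2*q1 - v2^2*n1*o2*q1*q2 + v2^2*n1*o1*o2*q2 + v2^2*n1*n2*o2*q1 - v2^2*n1*n2*o1*q2 - v1*n2*o2^2*q1*q2 + v1*n2*o1*o2*q2^2 + v1*n2^2*o2*q1*q2 - v1*n2^2*o1*o2*q2 - v1*n1*n2*o2*q2^2 + v1*n1*n2*o2^2*q2 + v1*v2*n2*o2^2*q1 - v1*v2*n2*o1*q2^2 - v1*v2*n2^2*o2*q1 + v1*v2*n2^2*o1*q2 + v1*v2*n1*o2*q2^2 - v1*v2*n1*o2^2*q2 + p2*n2^2*o1*q1*q2 - p2*n2^2*o1*o2*q1 - p2*n1*o2^2*q1*q2 + p2*n1*o1*o2*q2^2 + p2*n1*n2*o2^2*q1 - p2*n1*n2*o1*q2^2 - p2*v2^2*o1*q1*q2 + p2*v2^2*o1*o2*q1 + p2*v2^2*n1*q1*q2 - p2*v2^2*n1*o1*o2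 - p2*v2^2*n1*n2*q1 + p2*v2^2*n1*n2*o1 + p2*v1*o2^2*q1*q2 - p2*v1*o1*o2*q2^2 - p2*v1*n2^2*q1*q2 + p2*v1*n2^2*o1*o2 + p2*v1*n1*n2*q2^2 - p2*v1*n1*n2*o2^2 - p2*v1*v2*o2^2*q1 + p2*v1*v2*o1*q2^2 + p2*v1*v2*n2^2*q1 - p2*v1*v2*n2^2*o1 - p2*v1*v2*n1*q2^2 + p2*v1*v2*n1*o2^2 - p2^2*n2*o1*q1*q2 + p2^2*n2*o1*o2*q1 + p2^2*n1*o2*q1*q2 - p2^2*n1*o1*o2*q2 - p2^2*n1*n2*o2*q1 + p2^2*n1*n2*o1*q2 + p2^2*v2*o1*q1*q2 - p2^2*v2*o1*o2*q1 - p2^2*v2*n1*q1*q2 + p2^2*v2*n1*o1*o2 + p2^2*v2*n1*n2*q1 - p2^2*v2*n1*n2*o1 - p2^2*v1*o2*q1*q2 + p2^2*v1*o1*o2*q2 + p2^2*v1*n2*q1*q2 - p2^2*v1*n2*o1*o2 - p2^2*v1*n1*n2*q2 + p2^2*v1*n1*n2*o2 + p2^2*v1*v2*o2*q1 - p2^2*v1*v2*o1*q2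 - p2^2*v1*v2*n2*q1 + p2^2*v1*v2*n2*o1 + p2^2*v1*v2*n1*q2 - p2^2*v1*v2*n1*o2 + p1*n2*o2^2*q1*q2 - p1*n2*o1*o2*q2^2 - p1*n2^2*o2*q1*q2 + p1*n2^2*o1*o2*q2 + p1*n1*n2*o2*q2^2 - p1*n1*n2*o2^2*q2 - p1*v2*o2^2*q1*q2 + p1*v2*o1*o2*q2^2 + p1*v2*n2^2*q1*q2 - p1*v2*n2^2*o1*o2 - p1*v2*n1*n2*q2^2 + p1*v2*n1*n2*o2^2 + p1*v2^2*o2*q1*q2 - p1*v2^2*o1*o2*q2 - p1*v2^2*n2*q1*q2 + p1*v2^2*n2*o1*o2 + p1*v2^2*n1*n2*q2 - p1*v2^2*n1*n2*o2 - p1*v1*v2*o2*q2^2 + p1*v1*v2*o2^2*q2 + p1*v1*v2*n2*q2^2 - p1*v1*v2*n2*o2^2 - p1*v1*v2*n2^2*q2 + p1*v1*v2*n2^2*o2 - p1*p2*n2*o2^2*q1 + p1*p2*n2*o1*q2^2 + p1*p2*n2^2*o2*q1 - p1*p2*n2^2*o1*q2 - p1*p2*n1*o2*q2^2 + p1*p2*n1*o2^2*q2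 + p1*p2*v2*o2^2*q1 - p1*p2*v2*o1*q2^2 - p1*p2*v2*n2^2*q1 + p1*p2*v2*n2^2*o1 + p1*p2*v2*n1*q2^2 - p1*p2*v2*n1*o2^2 - p1*p2*v2^2*o2*q1 + p1*p2*v2^2*o1*q2 + p1*p2*v2^2*n2*q1 - p1*p2*v2^2*n2*o1 - p1*p2*v2^2*n1*q2 + p1*p2*v2^2*n1*o2 + p1*p2*v1*o2*q2^2 - p1*p2*v1*o2^2*q2 - p1*p2*v1*n2*q2^2 + p1*p2*v1*n2*o2^2 + p1*p2*v1*n2^2*q2 - p1*p2*v1*n2^2*o2) * hK +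
      (v2*n2^2*o1*k1*k2 - v2*n2^2*o1*o2*k1 - v2*n1*o2^2*k1*k2 + v2*n1*o1*o2*k2^2 + v2*n1*n2*o2^2*k1 - v2*n1*n2*o1*k2^2 - v2^2*n2*o1*k1*k2 + v2^2*n2*o1*o2*k1 + v2^2*n1*o2*k1*k2 - v2^2*n1*o1*o2*k2 - v2^2*n1*n2*o2*k1 + v2^2*n1*n2*o1*k2 + v1*n2*o2^2*k1*k2 - v1*n2*o1*o2*k2^2 - v1*n2^2*o2*k1*k2 + v1*n2^2*o1*o2*k2 + v1*n1*n2*o2*k2^2 - v1*n1*n2*o2^2*k2 - v1*v2*n2*o2^2*k1 + v1*v2*n2*o1*k2^2 + v1*v2*n2^2*o2*k1 - v1*v2*n2^2*o1*k2 - v1*v2*n1*o2*k2^2 + v1*v2*n1*o2^2*k2 - p2*n2^2*o1*k1*k2 + p2*n2^2*o1*o2*k1 + p2*n1*o2^2*k1*k2 - p2*n1*o1*o2*k2^2 - p2*n1*n2*o2^2*k1 + p2*n1*n2*o1*k2^2 + p2*v2^2*o1*k1*k2 - p2*v2^2*o1*o2*k1 - p2*v2^2*n1*k1*k2 + p2*v2^2*n1*o1*o2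 + p2*v2^2*n1*n2*k1 - p2*v2^2*n1*n2*o1 - p2*v1*o2^2*k1*k2 + p2*v1*o1*o2*k2^2 + p2*v1*n2^2*k1*k2 - p2*v1*n2^2*o1*o2 - p2*v1*n1*n2*k2^2 + p2*v1*n1*n2*o2^2 + p2*v1*v2*o2^2*k1 - p2*v1*v2*o1*k2^2 - p2*v1*v2*n2^2*k1 + p2*v1*v2*n2^2*o1 + p2*v1*v2*n1*k2^2 - p2*v1*v2*n1*o2^2 + p2^2*n2*o1*k1*k2 - p2^2*n2*o1*o2*k1 - p2^2*n1*o2*k1*k2 + p2^2*n1*o1*o2*k2 + p2^2*n1*n2*o2*k1 - p2^2*n1*n2*o1*k2 - p2^2*v2*o1*k1*k2 + p2^2*v2*o1*o2*k1 + p2^2*v2*n1*k1*k2 - p2^2*v2*n1*o1*o2 - p2^2*v2*n1*n2*k1 + p2^2*v2*n1*n2*o1 + p2^2*v1*o2*k1*k2 - p2^2*v1*o1*o2*k2 - p2^2*v1*n2*k1*k2 + p2^2*v1*n2*o1*o2 + p2^2*v1*n1*n2*k2 - p2^2*v1*n1*n2*o2 - p2^2*v1*v2*o2*k1 + p2^2*v1*v2*o1*k2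 + p2^2*v1*v2*n2*k1 - p2^2*v1*v2*n2*o1 - p2^2*v1*v2*n1*k2 + p2^2*v1*v2*n1*o2 - p1*n2*o2^2*k1*k2 + p1*n2*o1*o2*k2^2 + p1*n2^2*o2*k1*k2 - p1*n2^2*o1*o2*k2 - p1*n1*n2*o2*k2^2 + p1*n1*n2*o2^2*k2 + p1*v2*o2^2*k1*k2 - p1*v2*o1*o2*k2^2 - p1*v2*n2^2*k1*k2 + p1*v2*n2^2*o1*o2 + p1*v2*n1*n2*k2^2 - p1*v2*n1*n2*o2^2 - p1*v2^2*o2*k1*k2 + p1*v2^2*o1*o2*k2 + p1*v2^2*n2*k1*k2 - p1*v2^2*n2*o1*o2 - p1*v2^2*n1*n2*k2 + p1*v2^2*n1*n2*o2 + p1*v1*v2*o2*k2^2 - p1*v1*v2*o2^2*k2 - p1*v1*v2*n2*k2^2 + p1*v1*v2*n2*o2^2 + p1*v1*v2*n2^2*k2 - p1*v1*v2*n2^2*o2 + p1*p2*n2*o2^2*k1 - p1*p2*n2*o1*k2^2 - p1*p2*n2^2*o2*k1 + p1*p2*n2^2*o1*k2 + p1*p2*n1*o2*k2^2 - p1*p2*n1*o2^2*k2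 - p1*p2*v2*o2^2*k1 + p1*p2*v2*o1*k2^2 + p1*p2*v2*n2^2*k1 - p1*p2*v2*n2^2*o1 - p1*p2*v2*n1*k2^2 + p1*p2*v2*n1*o2^2 + p1*p2*v2^2*o2*k1 - p1*p2*v2^2*o1*k2 - p1*p2*v2^2*n2*k1 + p1*p2*v2^2*n2*o1 + p1*p2*v2^2*n1*k2 - p1*p2*v2^2*n1*o2 - p1*p2*v1*o2*k2^2 + p1*p2*v1*o2^2*k2 + p1*p2*v1*n2*k2^2 - p1*p2*v1*n2*o2^2 - p1*p2*v1*n2^2*k2 + p1*p2*v1*n2^2*o2) * hQ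

set_option maxHeartbeats 4000000 in
lemma pascal_coords (p1 p2 v1 v2 n1 n2 o1 o2 k1 k2 q1 q2 r m1 m2 s1 s2 x1 x2 : ℝ)
    (hP : p1^2 + p2^2 = r) (hV : v1^2 + v2^2 = r) (hN : n1^2 + n2^2 = r)
    (hO : o1^2 + o2^2 = r) (hK : k1^2 + k2^2 = r) (hQ : q1^2 + q2^2 = r)
    (dM1 : m1*(p2 - k2) + m2*(k1 - p1) + (p1*k2 - p2*k1) = 0)
    (dM2 : m1*(v2 - o2) + m2*(o1 - v1) + (v1*o2 - v2*o1) = 0)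
    (dS1 : s1*(n2 - k2) + s2*(k1 - n1) + (n1*k2 - n2*k1) = 0)
    (dS2 : s1*(v2 - q2) + s2*(q1 - v1) + (v1*q2 - v2*q1) = 0)
    (dX1 : x1*(n2 - o2) + x2*(o1 - n1) + (n1*o2 - n2*o1) = 0)
    (dX2 : x1*(p2 - q2) + x2*(q1 - p1) + (p1*q2 - p2*q1) = 0)
    (hPK : ¬(p1 = k1 ∧ p2 = k2)) (hVO : ¬(v1 = o1 ∧ v2 = o2))
    (hNK : ¬(n1 = k1 ∧ n2 = k2)) (hVQ : ¬(v1 = q1 ∧ v2 = q2))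
    (hNO : ¬(n1 = o1 ∧ n2 = o2)) (hPQ : ¬(p1 = q1 ∧ p2 = q2))
    (hVP : ¬(v1 = p1 ∧ v2 = p2)) (hVK : ¬(v1 = k1 ∧ v2 = k2))
    (hVN : ¬(v1 = n1 ∧ v2 = n2)) (hPN : ¬(p1 = n1 ∧ p2 = n2))
    (hPO : ¬(p1 = o1 ∧ p2 = o2)) :
    (s1 - m1)*(x2 - m2) - (s2 - m2)*(x1 - m1) = 0 := by
  obtain ⟨mx, hmx⟩ : ∃ a : ℝ, a = (((1:ℝ)*k1 - p1*(1:ℝ))*(v1*o2 - v2*o1) - (p1*k2 - p2*k1)*((1:ℝ)*o1 - v1*(1:ℝ))) := ⟨_, rfl⟩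
  obtain ⟨my, hmy⟩ : ∃ a : ℝ, a = ((p1*k2 - p2*k1)*(v2*(1:ℝ) - (1:ℝ)*o2) - (p2*(1:ℝ) - (1:ℝ)*k2)*(v1*o2 - v2*o1)) := ⟨_, rfl⟩
  obtain ⟨mz, hmz⟩ : ∃ a : ℝ, a = ((p2*(1:ℝ) - (1:ℝ)*k2)*((1:ℝ)*o1 - v1*(1:ℝ)) - ((1:ℝ)*k1 - p1*(1:ℝ))*(v2*(1:ℝ) - (1:ℝ)*o2)) := ⟨_, rfl⟩
  obtain ⟨sx, hsx⟩ : ∃ a : ℝ, a = (((1:ℝ)*k1 - n1*(1:ℝ))*(v1*q2 - v2*q1) - (n1*k2 - n2*k1)*((1:ℝ)*q1 - v1*(1:ℝ))) := ⟨_, rfl⟩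
  obtain ⟨sy, hsy⟩ : ∃ a : ℝ, a = ((n1*k2 - n2*k1)*(v2*(1:ℝ) - (1:ℝ)*q2) - (n2*(1:ℝ) - (1:ℝ)*k2)*(v1*q2 - v2*q1)) := ⟨_, rfl⟩
  obtain ⟨sz, hsz⟩ : ∃ a : ℝ, a = ((n2*(1:ℝ) - (1:ℝ)*k2)*((1:ℝ)*q1 - v1*(1:ℝ)) - ((1:ℝ)*k1 - n1*(1:ℝ))*(v2*(1:ℝ) - (1:ℝ)*q2)) := ⟨_, rfl⟩
  obtain ⟨xx, hxx⟩ : ∃ a : ℝ, a = (((1:ℝ)*o1 - n1*(1:ℝ))*(p1*q2 - p2*q1) - (n1*o2 - n2*o1)*((1:ℝ)*q1 - p1*(1:ℝ))) := ⟨_, rfl⟩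
  obtain ⟨xy, hxy⟩ : ∃ a : ℝ, a = ((n1*o2 - n2*o1)*(p2*(1:ℝ) - (1:ℝ)*q2) - (n2*(1:ℝ) - (1:ℝ)*o2)*(p1*q2 - p2*q1)) := ⟨_, rfl⟩
  obtain ⟨xz, hxz⟩ : ∃ a : ℝ, a = ((n2*(1:ℝ) - (1:ℝ)*o2)*((1:ℝ)*q1 - p1*(1:ℝ)) - ((1:ℝ)*o1 - n1*(1:ℝ))*(p2*(1:ℝ) - (1:ℝ)*q2)) := ⟨_, rfl⟩
  have hkey : mx*(sy*xz - sz*xy) + my*(sz*xx - sx*xz) + mz*(sx*xy - sy*xx) = 0 := by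
    rw [hmx, hmy, hmz, hsx, hsy, hsz, hxx, hxy, hxz]
    exact pascal_key p1 p2 v1 v2 n1 n2 o1 o2 k1 k2 q1 q2 r hP hV hN hO hK hQ
  have cMa : m2*mz - 1*my = 0 := by
    rw [hmy, hmz]; linear_combination (p2 - k2)*dM2 - (v2 - o2)*dM1
  have cMb : 1*mx - m1*mz = 0 := by
    rw [hmx, hmz]; linear_combination (k1 - p1)*dM2 - (o1 - v1)*dM1
  have cMc : m1*my - m2*mx = 0 := by
    rw [hmx, hmy]; linear_combination (p1*k2 - p2*k1)*dM2 - (v1*o2 - v2*o1)*dM1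
  have cSa : s2*sz - 1*sy = 0 := by
    rw [hsy, hsz]; linear_combination (n2 - k2)*dS2 - (v2 - q2)*dS1
  have cSb : 1*sx - s1*sz = 0 := by
    rw [hsx, hsz]; linear_combination (k1 - n1)*dS2 - (q1 - v1)*dS1
  have cSc : s1*sy - s2*sx = 0 := by
    rw [hsx, hsy]; linear_combination (n1*k2 - n2*k1)*dS2 - (v1*q2 - v2*q1)*dS1
  have cXa : x2*xz - 1*xy = 0 := by
    rw [hxy, hxz]; linear_combination (n2 - o2)*dX2 - (p2 - q2)*dX1
  have cXb : 1*xx - x1*xz = 0 := by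
    rw [hxx, hxz]; linear_combination (o1 - n1)*dX2 - (q1 - p1)*dX1
  have cXc : x1*xy - x2*xx = 0 := by
    rw [hxx, hxy]; linear_combination (n1*o2 - n2*o1)*dX2 - (p1*q2 - p2*q1)*dX1
  have hmne : ¬(mx = 0 ∧ my = 0 ∧ mz = 0) := by
    rw [hmx, hmy, hmz]
    exact line_cross_ne p1 p2 k1 k2 v1 v2 o1 o2 r hP hK hV hPK hVO hVP hVK
  have hsne : ¬(sx = 0 ∧ sy = 0 ∧ sz = 0) := by
    rw [hsx, hsy, hsz]
    exact line_cross_ne n1 n2 k1 k2 v1 v2 q1 q2 r hN hK hV hNK hVQ hVN hVK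
  have hxne : ¬(xx = 0 ∧ xy = 0 ∧ xz = 0) := by
    rw [hxx, hxy, hxz]
    exact line_cross_ne n1 n2 o1 o2 p1 p2 q1 q2 r hN hO hP hNO hPQ hPN hPO
  obtain ⟨lm, em1, em2, em3⟩ := prop3 m1 m2 1 mx my mz cMa cMb cMc (not_all3 hmne)
  obtain ⟨ls, es1, es2, es3⟩ := prop3 s1 s2 1 sx sy sz cSa cSb cSc (not_all3 hsne)
  obtain ⟨lx, ex1, ex2, ex3⟩ := prop3 x1 x2 1 xx xy xz cXa cXb cXc (not_all3 hxne)
  rw [em1, em2, es1, es2, ex1, ex2]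
  linear_combination (lm*ls*lx)*hkey + ((ls*sx)*(lx*xy) - (ls*sy)*(lx*xx))*em3 +
    ((lm*my)*(lx*xx) - (lm*mx)*(lx*xy))*es3 + ((lm*mx)*(ls*sy) - (lm*my)*(ls*sx))*ex3

lemma sphere_coords (P O₀ : Pt) (ρ : ℝ) (hP : P ∈ Metric.sphere O₀ ρ) :
    (P 0 - O₀ 0)^2 + (P 1 - O₀ 1)^2 = ρ^2 := by
  rw [mem_sphere_iff_norm, EuclideanSpace.norm_eq] at hP
  have h2 : ∑ i : Fin 2, ((P - O₀) i)^2 = ρ^2 := by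
    rw [← hP, Real.sq_sqrt (by positivity)]
    simp [sq_abs]
  simpa [Fin.sum_univ_two] using h2

lemma lineThrough_param (M P K : Pt) (h : M ∈ lineThrough P K) :
    ∃ t : ℝ, M 0 = P 0 + t * (K 0 - P 0) ∧ M 1 = P 1 + t * (K 1 - P 1) := by
  rw [lineThrough, show M = (M -ᵥ P) +ᵥ P from (vsub_vadd M P).symm,
    vadd_left_mem_affineSpan_pair] at h
  obtain ⟨t, ht⟩ := h
  have h0 := congrArg (fun v : Pt => v 0) ht
  have h1 := congrArg (fun v : Pt => v 1) ht
  simp [PiLp.smul_apply, PiLp.sub_apply, smul_eq_mul] at h0 h1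
  exact ⟨t, by linarith, by linarith⟩

lemma ne_coords (A B O₀ : Pt) (h : A ≠ B) :
    ¬(A 0 - O₀ 0 = B 0 - O₀ 0 ∧ A 1 - O₀ 1 = B 1 - O₀ 1) := by
  rintro ⟨h1, h2⟩
  refine h ?_
  ext i
  fin_cases i
  · exact show A 0 = B 0 by linarith
  · exact show A 1 = B 1 by linarith

/-- Pascal'"'"'s Lemma I for the circle: M, S, X are collinear. -/
theorem pascal_lemma_I
    (O₀ : Pt) (ρ : ℝ) (hρ : 0 < ρ)
    (P V N O K Q : Pt)
    (hP : P ∈ Metric.sphere O₀ ρ) (hV : V ∈ Metric.sphere O₀ ρ)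
    (hN : N ∈ Metric.sphere O₀ ρ) (hO : O ∈ Metric.sphere O₀ ρ)
    (hK : K ∈ Metric.sphere O₀ ρ) (hQ : Q ∈ Metric.sphere O₀ ρ)
    (hdist : List.Pairwise (· ≠ ·) [P, V, N, O, K, Q])
    (M S X : Pt)
    (hM₁ : M ∈ lineThrough P K) (hM₂ : M ∈ lineThrough V O)
    (hS₁ : S ∈ lineThrough N K) (hS₂ : S ∈ lineThrough V Q)
    (hX₁ : X ∈ lineThrough N O) (hX₂ : X ∈ lineThrough P Q) :
    Collinear ℝ ({M, S, X} : Set Pt) := by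
  have hp := sphere_coords P O₀ ρ hP
  have hv := sphere_coords V O₀ ρ hV
  have hn := sphere_coords N O₀ ρ hN
  have ho := sphere_coords O O₀ ρ hO
  have hk := sphere_coords K O₀ ρ hK
  have hq := sphere_coords Q O₀ ρ hQ
  obtain ⟨tM1, hM1a, hM1b⟩ := lineThrough_param M P K hM₁
  obtain ⟨tM2, hM2a, hM2b⟩ := lineThrough_param M V O hM₂
  obtain ⟨tS1, hS1a, hS1b⟩ := lineThrough_param S N K hS₁
  obtain ⟨tS2, hS2a, hS2b⟩ := lineThrough_param S V Q hS₂
  obtain ⟨tX1, hX1a, hX1b⟩ := lineThrough_param X N O hX₁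
  obtain ⟨tX2, hX2a, hX2b⟩ := lineThrough_param X P Q hX₂
  simp only [List.pairwise_cons, List.mem_cons, List.mem_singleton,
    List.not_mem_nil, List.Pairwise.nil] at hdist
  obtain ⟨h1, h2, h3, h4, h5, h6⟩ := hdist
  have hPK' : P ≠ K := h1 K (by tauto)
  have hPV' : P ≠ V := h1 V (by tauto)
  have hPN' : P ≠ N := h1 N (by tauto)
  have hPO' : P ≠ O := h1 O (by tauto)
  have hPQ' : P ≠ Q := h1 Q (by tauto)
  have hVN' : V ≠ N := h2 N (by tauto)
  have hVO' : V ≠ O := h2 O (by tauto)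
  have hVK' : V ≠ K := h2 K (by tauto)
  have hVQ' : V ≠ Q := h2 Q (by tauto)
  have hNO' : N ≠ O := h3 O (by tauto)
  have hNK' : N ≠ K := h3 K (by tauto)
  have hfinal := pascal_coords (P 0 - O₀ 0) (P 1 - O₀ 1) (V 0 - O₀ 0) (V 1 - O₀ 1)
    (N 0 - O₀ 0) (N 1 - O₀ 1) (O 0 - O₀ 0) (O 1 - O₀ 1) (K 0 - O₀ 0) (K 1 - O₀ 1)
    (Q 0 - O₀ 0) (Q 1 - O₀ 1) (ρ^2) (M 0 - O₀ 0) (M 1 - O₀ 1) (S 0 - O₀ 0) (S 1 - O₀ 1)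
    (X 0 - O₀ 0) (X 1 - O₀ 1) hp hv hn ho hk hq
    (by linear_combination ((P 1 - O₀ 1) - (K 1 - O₀ 1))*hM1a + ((K 0 - O₀ 0) - (P 0 - O₀ 0))*hM1b)
    (by linear_combination ((V 1 - O₀ 1) - (O 1 - O₀ 1))*hM2a + ((O 0 - O₀ 0) - (V 0 - O₀ 0))*hM2b)
    (by linear_combination ((N 1 - O₀ 1) - (K 1 - O₀ 1))*hS1a + ((K 0 - O₀ 0) - (N 0 - O₀ 0))*hS1b)
    (by linear_combination ((V 1 - O₀ 1) - (Q 1 - O₀ 1))*hS2a + ((Q 0 - O₀ 0) - (V 0 - O₀ 0))*hS2b)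
    (by linear_combination ((N 1 - O₀ 1) - (O 1 - O₀ 1))*hX1a + ((O 0 - O₀ 0) - (N 0 - O₀ 0))*hX1b)
    (by linear_combination ((P 1 - O₀ 1) - (Q 1 - O₀ 1))*hX2a + ((Q 0 - O₀ 0) - (P 0 - O₀ 0))*hX2b)
    (ne_coords P K O₀ hPK') (ne_coords V O O₀ hVO') (ne_coords N K O₀ hNK')
    (ne_coords V Q O₀ hVQ') (ne_coords N O O₀ hNO') (ne_coords P Q O₀ hPQ')
    (ne_coords V P O₀ hPV'.symm) (ne_coords V K O₀ hVK') (ne_coords V N O₀ hVN')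
    (ne_coords P N O₀ hPN') (ne_coords P O O₀ hPO')
  have det2 : (S 0 - M 0)*(X 1 - M 1) - (S 1 - M 1)*(X 0 - M 0) = 0 := by
    linear_combination hfinal
  by_cases hXM : X = M
  · subst hXM
    refine (collinear_pair ℝ X S).subset ?_
    intro y hy
    simp only [Set.mem_insert_iff, Set.mem_singleton_iff] at hy ⊢
    tauto
  · have hne2 : ¬(X 0 - M 0 = 0 ∧ X 1 - M 1 = 0) := by
      rintro ⟨hc1, hc2⟩
      refine hXM ?_
      ext i
      fin_cases i
      · exact show X 0 = M 0 by linarith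
      · exact show X 1 = M 1 by linarith
    obtain ⟨c, hc1, hc2⟩ := prop2 (X 0 - M 0) (X 1 - M 1) (S 0 - M 0) (S 1 - M 1) hne2
      (by linear_combination -det2)
    have hmem : S ∈ line[ℝ, M, X] := by
      rw [show S = (S -ᵥ M) +ᵥ M from (vsub_vadd S M).symm, vadd_left_mem_affineSpan_pair]
      refine ⟨c, ?_⟩
      ext i
      fin_cases i
      · show (c • (X -ᵥ M)) 0 = (S -ᵥ M) 0
        simp only [PiLp.smul_apply, PiLp.sub_apply, smul_eq_mul, vsub_eq_sub]
        linarith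
      · show (c • (X -ᵥ M)) 1 = (S -ᵥ M) 1
        simp only [PiLp.smul_apply, PiLp.sub_apply, smul_eq_mul, vsub_eq_sub]
        linarith
    refine (collinear_insert_of_mem_affineSpan_pair hmem).subset ?_
    intro y hy
    simp only [Set.mem_insert_iff, Set.mem_singleton_iff] at hy ⊢
    tauto
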